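/- arXiv:0711.0206 — 5 statements merged into one kernel-verified Lean document; each statement's English description precedes it below -/
import Mathlib

section
/- For any x in a vector space X₀ and any probability measure R on Z and measurable θ : Z → X₀, one has sup_{y ∈ Y₀} { ⟨y,x⟩ − log ∫_Z e^{⟨y,θ⟩} dR } = sup_{(a,y) ∈ ℝ × Y₀} { a + ⟨y,x⟩ − ∫_Z (e^{a + ⟨y,θ(z)⟩} − 1) R(dz) }, where both sides take values in (−∞, +∞]. -/
open MeasureTheory ENNReal

private lemma aux518 (I : ℝ≥0∞) (hI : I ≠ 0) (c : ℝ) :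
    (⨆ a : ℝ, (((a + c : ℝ) : EReal)
        - (((ENNReal.ofReal (Real.exp a) * I : ℝ≥0∞) : EReal) - 1)))
      = (c : EReal) - ENNReal.log I := by
  rcases eq_or_ne I ⊤ with hT | hT
  · subst hT
    have hb : ∀ a : ℝ, (((a + c : ℝ) : EReal)
        - (((ENNReal.ofReal (Real.exp a) * (⊤ : ℝ≥0∞) : ℝ≥0∞) : EReal) - 1)) = ⊥ := by
      intro a
      rw [ENNReal.mul_top (by simp [(Real.exp_pos a).not_ge])]
      have h1 : ((⊤ : ℝ≥0∞) : EReal) - 1 = ⊤ := by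
        rw [EReal.coe_ennreal_top]
        rfl
      rw [h1, EReal.sub_top]
    simp only [hb, ENNReal.log_top, EReal.sub_top, iSup_const]
  · set t := I.toReal with htdef
    have ht : 0 < t := ENNReal.toReal_pos hI hT
    have hIt : I = ENNReal.ofReal t := (ENNReal.ofReal_toReal hT).symm
    have key : ∀ a : ℝ, (((a + c : ℝ) : EReal)
        - (((ENNReal.ofReal (Real.exp a) * I : ℝ≥0∞) : EReal) - 1))
        = ((a + c - (Real.exp a * t - 1) : ℝ) : EReal) := by
      intro a
      rw [hIt, ← ENNReal.ofReal_mul (Real.exp_pos a).le, EReal.coe_ennreal_ofReal,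
        max_eq_left (by positivity : (0:ℝ) ≤ Real.exp a * t)]
      norm_cast
    simp only [key]
    rw [ENNReal.log_pos_real hI hT, ← htdef, ← EReal.coe_sub]
    apply le_antisymm
    · apply iSup_le; intro a
      apply EReal.coe_le_coe_iff.mpr
      have h := Real.add_one_le_exp (Real.log t + a)
      rw [Real.exp_add, Real.exp_log ht] at h
      linarith
    · refine le_trans (le_of_eq ?_) (le_iSup _ (-Real.log t))
      apply congrArg
      rw [Real.exp_neg, Real.exp_log ht, inv_mul_cancel₀ ht.ne']
      ring

/-- Lemma 5.18: for a probability measure `R`,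
`sup_y { ⟨y,x⟩ − log ∫ e^{⟨y,θ⟩} dR } = sup_{(a,y)} { a + ⟨y,x⟩ − ∫ (e^{a+⟨y,θ⟩} − 1) dR }`,
both sides taking values in `(−∞, +∞]`.  Here the pairing with `x` is the linear form `p`
and `⟨y, θ(·)⟩` is the function `B y`. -/
theorem stmt1 {Z : Type*} [MeasurableSpace Z] (R : Measure Z) [IsProbabilityMeasure R]
    {Y : Type*} [AddCommGroup Y] [Module ℝ Y]
    (p : Y →ₗ[ℝ] ℝ) (B : Y →ₗ[ℝ] (Z → ℝ)) (hB : ∀ y, Measurable (B y)) :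
    (⨆ y : Y, ((p y : EReal)
        - ENNReal.log (∫⁻ z, ENNReal.ofReal (Real.exp (B y z)) ∂ R)))
      = (⨆ q : ℝ × Y, (((q.1 + p q.2 : ℝ) : EReal)
        - (((∫⁻ z, ENNReal.ofReal (Real.exp (q.1 + B q.2 z)) ∂ R : ℝ≥0∞) : EReal) - 1)))
    ∧ ⊥ < (⨆ y : Y, ((p y : EReal)
        - ENNReal.log (∫⁻ z, ENNReal.ofReal (Real.exp (B y z)) ∂ R))) := by
  have hmeas : ∀ y : Y, Measurable fun z => ENNReal.ofReal (Real.exp (B y z)) :=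
    fun y => (Real.measurable_exp.comp (hB y)).ennreal_ofReal
  have hI0 : ∀ y : Y, (∫⁻ z, ENNReal.ofReal (Real.exp (B y z)) ∂ R) ≠ 0 := by
    intro y h
    rw [lintegral_eq_zero_iff (hmeas y)] at h
    have hfalse : ∀ᵐ z ∂ R, False := by
      filter_upwards [h] with z hz
      simp only [Pi.zero_apply, ENNReal.ofReal_eq_zero] at hz
      exact (Real.exp_pos (B y z)).not_ge hz
    rw [ae_iff] at hfalse
    simp only [not_false_eq_true, Set.setOf_true, measure_univ] at hfalse
    exact one_ne_zero hfalse
  have hscale : ∀ (a : ℝ) (y : Y),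
      (∫⁻ z, ENNReal.ofReal (Real.exp (a + B y z)) ∂ R)
        = ENNReal.ofReal (Real.exp a) * ∫⁻ z, ENNReal.ofReal (Real.exp (B y z)) ∂ R := by
    intro a y
    simp_rw [Real.exp_add, ENNReal.ofReal_mul (Real.exp_pos a).le]
    exact lintegral_const_mul _ (hmeas y)
  constructor
  · rw [iSup_prod, iSup_comm]
    refine (iSup_congr fun y => ?_).symm
    simp only [hscale]
    exact aux518 _ (hI0 y) (p y)
  · have h0 : ((p (0:Y) : EReal)
        - ENNReal.log (∫⁻ z, ENNReal.ofReal (Real.exp (B (0:Y) z)) ∂ R)) = 0 := by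
      simp [map_zero]
    refine lt_of_lt_of_le EReal.bot_lt_zero (le_trans (le_of_eq h0.symm) ?_)
    exact le_iSup (fun y : Y => ((p y : EReal)
      - ENNReal.log (∫⁻ z, ENNReal.ofReal (Real.exp (B y z)) ∂ R))) (0 : Y)
end

section
/- Let f : X → (−∞,∞] be inf-compact and g : X → (−∞,∞] be lower semicontinuous on a Hausdorff topological vector space X. Then the inf-convolution f □ g, defined by (f □ g)(x) = inf{ f(u) + g(x − u) : u ∈ X }, is lower semicontinuous. -/
open ENNReal

/-- If `f` is inf-compact and `g` is lower semicontinuous on a Hausdorff topological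
vector group, then the inf-convolution `x ↦ inf_u { f(u) + g(x − u) }` is lower
semicontinuous. -/
theorem stmt12 {X : Type*} [TopologicalSpace X] [T2Space X] [AddCommGroup X]
    [IsTopologicalAddGroup X]
    (f g : X → ℝ≥0∞)
    (hf : ∀ c : ℝ≥0∞, c ≠ ⊤ → IsCompact {x : X | f x ≤ c})
    (hg : LowerSemicontinuous g) :
    LowerSemicontinuous (fun x : X => ⨅ u : X, f u + g (x - u)) := by
  -- f is lower semicontinuous since its sublevel sets are compact, hence closed.
  have hflsc : LowerSemicontinuous f := by
    rw [lowerSemicontinuous_iff_isClosed_preimage]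
    intro y
    rcases eq_or_ne y ⊤ with rfl | hy
    · have : f ⁻¹' Set.Iic ⊤ = Set.univ := by
        ext x; simp
      rw [this]; exact isClosed_univ
    · exact (hf y hy).isClosed
  have hφ : LowerSemicontinuous (fun p : X × X => f p.2 + g (p.1 - p.2)) :=
    LowerSemicontinuous.add (LowerSemicontinuous.comp hflsc continuous_snd)
      (LowerSemicontinuous.comp hg (continuous_fst.sub continuous_snd))
  intro x₀ c hc
  obtain ⟨b, hcb, hbh⟩ := exists_between hc
  have hbtop : b ≠ ⊤ := hbh.ne_top
  have hK : IsCompact {u : X | f u ≤ b} := hf b hbtop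
  have hopen : IsOpen {p : X × X | b < f p.2 + g (p.1 - p.2)} := by
    have := lowerSemicontinuous_iff_isOpen_preimage.1 hφ b
    exact this
  have hsub : ({x₀} : Set X) ×ˢ {u : X | f u ≤ b} ⊆ {p : X × X | b < f p.2 + g (p.1 - p.2)} := by
    rintro ⟨x, u⟩ ⟨hx, hu⟩
    simp only [Set.mem_singleton_iff] at hx
    subst hx
    exact hbh.trans_le (iInf_le _ u)
  obtain ⟨V, W, hV, hW, hx₀V, hKW, hVW⟩ :=
    generalized_tube_lemma isCompact_singleton hK hopen hsub
  filter_upwards [hV.mem_nhds (hx₀V rfl)] with x hx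
  refine hcb.trans_le (le_iInf fun u => ?_)
  by_cases hu : f u ≤ b
  · have hm : (x, u) ∈ V ×ˢ W := ⟨hx, hKW hu⟩
    exact (hVW hm).le
  · exact (not_le.1 hu).le.trans le_self_add
end

section
/- Let ρ be a finite Young function on a σ-finite measure space (Z, R). A continuous linear functional ℓ on the Orlicz space L_ρ is singular (i.e., for every u ∈ L_ρ there is a decreasing sequence of measurable sets A_n with R(⋂_n A_n) = 0 and ⟨ℓ, u·1_{Z∖A_n}⟩ = 0 for all n) if and only if ⟨ℓ, u⟩ = 0 for every u in the small Orlicz space E_ρ = { u : ∫ ρ(z, αu(z)) dR < ∞ for all α > 0 }. -/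
open MeasureTheory ENNReal Filter Topology

/-- Proposition 2.4: for a finite Young function `ρ` on a σ-finite measure space, a
continuous linear functional `ℓ` on the Orlicz space `L_ρ` is singular (for each
`u ∈ L_ρ` there is a decreasing sequence of measurable sets `A_n` with `R(⋂ A_n) = 0`
and `⟨ℓ, u 1_{Z∖A_n}⟩ = 0` for all `n`) if and only if `ℓ` vanishes on the small Orlicz
space `E_ρ`. -/
theorem stmt15 {Z : Type*} [MeasurableSpace Z] (R : Measure Z) [SigmaFinite R]
    (ρ : Z → ℝ → ℝ≥0∞)
    -- ρ is a finite Young function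
    (hfin : ∀ z s, ρ z s ≠ ⊤)
    (hconvex : ∀ z, ∀ a b s t : ℝ, 0 ≤ a → 0 ≤ b → a + b = 1 →
      ρ z (a * s + b * t) ≤ ENNReal.ofReal a * ρ z s + ENNReal.ofReal b * ρ z t)
    (heven : ∀ z, ∀ s : ℝ, ρ z (-s) = ρ z s)
    (hzero : ∀ z, ρ z 0 = 0)
    (hpos : ∀ z, ∃ s : ℝ, 0 < s ∧ 0 < ρ z s)
    -- the Orlicz space L_ρ and the small Orlicz space E_ρ
    (Lρ Eρ : Set (Z → ℝ))
    (hLρ : Lρ = {w : Z → ℝ | Measurable w ∧ ∃ α : ℝ, 0 < α ∧ ∫⁻ z, ρ z (α * w z) ∂ R ≠ ⊤})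
    (hEρ : Eρ = {w : Z → ℝ | Measurable w ∧ ∀ α : ℝ, 0 < α → ∫⁻ z, ρ z (α * w z) ∂ R ≠ ⊤})
    -- ℓ is a linear functional, continuous w.r.t. the Luxemburg norm
    (ℓ : (Z → ℝ) →ₗ[ℝ] ℝ)
    (hcont : ∃ K : ℝ, ∀ w : Z → ℝ, ∀ β : ℝ, 0 < β →
      (∫⁻ z, ρ z (w z / β) ∂ R) ≤ 1 → |ℓ w| ≤ K * β) :
    (∀ u ∈ Lρ, ∃ A : ℕ → Set Z, (∀ n, MeasurableSet (A n)) ∧ Antitone A ∧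
        R (⋂ n, A n) = 0 ∧ ∀ n, ℓ ((A n)ᶜ.indicator u) = 0)
    ↔ (∀ u ∈ Eρ, ℓ u = 0) := by
  obtain ⟨K, hK⟩ := hcont
  -- ρ z s = ρ z |s|
  have habs : ∀ z (s : ℝ), ρ z s = ρ z |s| := by
    intro z s
    rcases abs_cases s with ⟨h, _⟩ | ⟨h, _⟩
    · rw [h]
    · rw [h, heven]
  -- monotonicity of ρ in |s|
  have hmono0 : ∀ z, ∀ s t : ℝ, 0 ≤ s → s ≤ t → ρ z s ≤ ρ z t := by
    intro z s t hs hst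
    rcases eq_or_lt_of_le (hs.trans hst) with h | h
    · have hs0 : s = 0 := le_antisymm (hst.trans h.symm.le) hs
      rw [hs0, ← h]
    · have h1 : s / t ≤ 1 := div_le_one_of_le₀ hst h.le
      have h2 : 0 ≤ 1 - s / t := by linarith
      have key := hconvex z (s / t) (1 - s / t) t 0 (div_nonneg hs h.le) h2 (by ring)
      have he : s / t * t + (1 - s / t) * 0 = s := by field_simp; ring
      rw [he, hzero, mul_zero, add_zero] at key
      calc ρ z s ≤ ENNReal.ofReal (s / t) * ρ z t := key
        _ ≤ 1 * ρ z t := mul_le_mul_left (ENNReal.ofReal_le_one.2 h1) _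
        _ = ρ z t := one_mul _
  have hmono : ∀ z, ∀ s t : ℝ, |s| ≤ |t| → ρ z s ≤ ρ z t := by
    intro z s t h
    rw [habs z s, habs z t]
    exact hmono0 z _ _ (abs_nonneg s) h
  -- indicator integral identity
  have hind : ∀ (B : Set Z), MeasurableSet B → ∀ (v : Z → ℝ) (γ : ℝ),
      ∫⁻ z, ρ z (γ * B.indicator v z) ∂ R = ∫⁻ z in B, ρ z (γ * v z) ∂ R := by
    intro B hB v γ
    rw [← lintegral_indicator hB]
    congr 1
    funext z
    by_cases hz : z ∈ B
    · simp only [Set.indicator_of_mem hz]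
    · simp only [Set.indicator_of_notMem hz, mul_zero, hzero]
  constructor
  · -- singular → vanishes on Eρ
    intro hsing u huE
    rw [hEρ] at huE
    obtain ⟨humeas, hall⟩ := huE
    have huL : u ∈ Lρ := by
      rw [hLρ]; exact ⟨humeas, 1, one_pos, hall 1 one_pos⟩
    obtain ⟨A, hAm, hAanti, hAnull, hAzero⟩ := hsing u huL
    have hK0 : 0 ≤ K := by
      have h0 := hK 0 1 one_pos (by simp [hzero])
      simpa using h0
    have key : ∀ β : ℝ, 0 < β → |ℓ u| ≤ K * β := by
      intro β hβ
      set f : Z → ℝ≥0∞ := fun z => ρ z (β⁻¹ * u z) with hf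
      have hfint : ∫⁻ z, f z ∂ R ≠ ⊤ := hall β⁻¹ (inv_pos.2 hβ)
      obtain ⟨g, hgm, hgle, hgeq⟩ := exists_measurable_le_forall_setLIntegral_eq R f
      set ν := R.withDensity g with hν
      have hνA : ∀ n, ν (A n) = ∫⁻ z in A n, f z ∂ R := by
        intro n; rw [withDensity_apply _ (hAm n), hgeq]
      have hνfin : ν (A 0) ≠ ⊤ := by
        rw [hνA 0]
        exact ne_top_of_le_ne_top hfint (setLIntegral_le_lintegral _ _)
      have htend : Tendsto (ν ∘ A) atTop (𝓝 (ν (⋂ n, A n))) :=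
        tendsto_measure_iInter_atTop (fun n => (hAm n).nullMeasurableSet) hAanti ⟨0, hνfin⟩
      have hint0 : ν (⋂ n, A n) = 0 := by
        rw [withDensity_apply _ (MeasurableSet.iInter hAm),
          Measure.restrict_eq_zero.2 hAnull, lintegral_zero_measure]
      rw [hint0] at htend
      have hev : ∀ᶠ n in atTop, (ν ∘ A) n < 1 :=
        htend.eventually (Filter.Tendsto.eventually_lt_const zero_lt_one tendsto_id)
      obtain ⟨n, hn⟩ := hev.exists
      have hw : ∫⁻ z, ρ z ((A n).indicator u z / β) ∂ R ≤ 1 := by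
        have heq : (fun z => ρ z ((A n).indicator u z / β))
            = fun z => ρ z (β⁻¹ * (A n).indicator u z) := by
          funext z; rw [div_eq_inv_mul]
        calc ∫⁻ z, ρ z ((A n).indicator u z / β) ∂ R
            = ∫⁻ z, ρ z (β⁻¹ * (A n).indicator u z) ∂ R := by rw [heq]
          _ = ∫⁻ z in A n, ρ z (β⁻¹ * u z) ∂ R := hind (A n) (hAm n) u β⁻¹
          _ = ν (A n) := (hνA n).symm
          _ ≤ 1 := hn.le
      have hb := hK ((A n).indicator u) β hβ hw
      have hdecomp : ℓ u = ℓ ((A n).indicator u) := by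
        conv_lhs => rw [← Set.indicator_self_add_compl (A n) u]
        rw [map_add, hAzero n, add_zero]
      rw [hdecomp]; exact hb
    by_contra hne
    have habs0 : 0 < |ℓ u| := abs_pos.2 hne
    have hk1 : (0:ℝ) < K + 1 := by linarith
    have h1 := key (|ℓ u| / (K + 1)) (by positivity)
    have h2 : K * (|ℓ u| / (K + 1)) < |ℓ u| := by
      rw [← mul_div_assoc, div_lt_iff₀ hk1]
      nlinarith
    linarith
  · -- vanishes on Eρ → singular
    intro hvan u huL
    rw [hLρ] at huL
    obtain ⟨humeas, -⟩ := huL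
    -- measurable densities for the integrals of ρ(z, m u z)
    have hex : ∀ m : ℕ, ∃ g : Z → ℝ≥0∞, Measurable g ∧
        g ≤ (fun z => ρ z ((m : ℝ) * u z)) ∧
        ∀ B : Set Z, ∫⁻ z in B, ρ z ((m : ℝ) * u z) ∂ R = ∫⁻ z in B, g z ∂ R :=
      fun m => exists_measurable_le_forall_setLIntegral_eq R _
    choose g hgm hgle hgeq using hex
    have hgfin : ∀ m z, g m z ≠ ⊤ := fun m z => ne_top_of_le_ne_top (hfin z _) (hgle m z)
    -- choose thresholds
    have hthr : ∀ n m : ℕ, ∃ c : ℕ,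
        R (spanningSets R n ∩ {z | (c : ℝ≥0∞) < g m z}) < 2⁻¹ ^ n * 2⁻¹ ^ m := by
      intro n m
      set E : ℕ → Set Z := fun c => spanningSets R n ∩ {z | (c : ℝ≥0∞) < g m z} with hE
      have hmeasE : ∀ c : ℕ, MeasurableSet (E c) := fun c =>
        (measurableSet_spanningSets R n).inter (measurableSet_lt measurable_const (hgm m))
      have hanti : Antitone E := by
        intro c c' hcc' z hz
        refine ⟨hz.1, ?_⟩
        show (c : ℝ≥0∞) < g m z
        exact lt_of_le_of_lt (by exact_mod_cast hcc' : (c : ℝ≥0∞) ≤ c') hz.2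
      have hempty : (⋂ c : ℕ, E c) = ∅ := by
        ext z
        simp only [Set.mem_iInter, Set.mem_empty_iff_false, iff_false]
        intro h
        obtain ⟨c, hc⟩ := ENNReal.exists_nat_gt (hgfin m z)
        exact absurd (h c).2 (not_lt.2 hc.le)
      have hfinE : R (E 0) ≠ ⊤ :=
        ne_top_of_le_ne_top (measure_spanningSets_lt_top R n).ne
          (measure_mono Set.inter_subset_left)
      have htend := tendsto_measure_iInter_atTop
        (fun c => (hmeasE c).nullMeasurableSet) hanti ⟨0, hfinE⟩
      rw [hempty, measure_empty] at htend
      have hδ : (0 : ℝ≥0∞) < 2⁻¹ ^ n * 2⁻¹ ^ m := by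
        apply ENNReal.mul_pos <;>
          exact pow_ne_zero _ (ENNReal.inv_ne_zero.2 ENNReal.ofNat_ne_top)
      exact (htend.eventually (Filter.Tendsto.eventually_lt_const hδ tendsto_id)).exists
    choose c hc using hthr
    set C : ℕ → Set Z := fun n =>
      spanningSets R n ∩ ⋂ m : ℕ, {z | g m z ≤ (c n m : ℝ≥0∞)} with hC
    have hCmeas : ∀ n, MeasurableSet (C n) := fun n =>
      (measurableSet_spanningSets R n).inter
        (MeasurableSet.iInter fun m => measurableSet_le (hgm m) measurable_const)
    set B : ℕ → Set Z := fun n => ⋃ k ∈ Finset.range (n + 1), C k with hB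
    have hBmeas : ∀ n, MeasurableSet (B n) :=
      fun n => (Finset.range (n + 1)).measurableSet_biUnion (fun k _ => hCmeas k)
    have hBmono : Monotone B := by
      intro n n' hnn'
      intro z hz
      simp only [hB, Set.mem_iUnion] at hz ⊢
      obtain ⟨k, hk, hzk⟩ := hz
      exact ⟨k, Finset.mem_range.2 (lt_of_lt_of_le (Finset.mem_range.1 hk) (by omega)), hzk⟩
    -- key integrability of g m on B n
    have hBint : ∀ n m : ℕ, ∫⁻ z in B n, g m z ∂ R ≠ ⊤ := by
      intro n m
      have hsub : R.withDensity (g m) (B n)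
          ≤ ∑ k ∈ Finset.range (n + 1), R.withDensity (g m) (C k) :=
        measure_biUnion_finset_le _ _
      have hCk : ∀ k, R.withDensity (g m) (C k) ≤ (c k m : ℝ≥0∞) * R (spanningSets R k) := by
        intro k
        rw [withDensity_apply _ (hCmeas k)]
        calc ∫⁻ z in C k, g m z ∂ R ≤ ∫⁻ _ in C k, (c k m : ℝ≥0∞) ∂ R := by
              apply setLIntegral_mono measurable_const
              intro z hz
              exact Set.mem_iInter.1 hz.2 m
          _ = (c k m : ℝ≥0∞) * R (C k) := setLIntegral_const _ _
          _ ≤ (c k m : ℝ≥0∞) * R (spanningSets R k) :=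
              mul_le_mul_right (measure_mono Set.inter_subset_left) _
      rw [← withDensity_apply _ (hBmeas n)]
      refine ne_top_of_le_ne_top ?_ (hsub.trans (Finset.sum_le_sum fun k _ => hCk k))
      exact (ENNReal.sum_lt_top.2 fun k _ =>
        ENNReal.mul_lt_top (by simp) (measure_spanningSets_lt_top R k)).ne
    -- measure bound on the bad sets
    have hD : ∀ n : ℕ,
        R (spanningSets R n \ ⋂ m : ℕ, {z | g m z ≤ (c n m : ℝ≥0∞)}) ≤ 2⁻¹ ^ n * 2 := by
      intro n
      have hsub : spanningSets R n \ ⋂ m : ℕ, {z | g m z ≤ (c n m : ℝ≥0∞)}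
          ⊆ ⋃ m : ℕ, spanningSets R n ∩ {z | (c n m : ℝ≥0∞) < g m z} := by
        intro z hz
        obtain ⟨hz1, hz2⟩ := hz
        rw [Set.mem_iInter] at hz2
        push_neg at hz2
        obtain ⟨m, hm⟩ := hz2
        refine Set.mem_iUnion.2 ⟨m, hz1, ?_⟩
        show (c n m : ℝ≥0∞) < g m z
        exact lt_of_not_ge hm
      calc R (spanningSets R n \ ⋂ m : ℕ, {z | g m z ≤ (c n m : ℝ≥0∞)})
          ≤ ∑' m : ℕ, R (spanningSets R n ∩ {z | (c n m : ℝ≥0∞) < g m z}) :=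
            (measure_mono hsub).trans (measure_iUnion_le _)
        _ ≤ ∑' m : ℕ, 2⁻¹ ^ n * 2⁻¹ ^ m := ENNReal.tsum_le_tsum fun m => (hc n m).le
        _ = 2⁻¹ ^ n * ∑' m : ℕ, 2⁻¹ ^ m := ENNReal.tsum_mul_left
        _ = 2⁻¹ ^ n * 2 := by
            rw [ENNReal.tsum_geometric, ENNReal.one_sub_inv_two, inv_inv]
    refine ⟨fun n => (B n)ᶜ, fun n => (hBmeas n).compl,
      fun n n' h => Set.compl_subset_compl.2 (hBmono h), ?_, ?_⟩
    · -- null intersection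
      have hAB : (⋂ n, (B n)ᶜ) = (⋃ n, C n)ᶜ := by
        rw [← Set.compl_iUnion]
        congr 1
        apply Set.Subset.antisymm
        · apply Set.iUnion_subset
          intro n
          apply Set.iUnion₂_subset
          intro k _
          exact Set.subset_iUnion C k
        · intro z hz
          obtain ⟨n, hn⟩ := Set.mem_iUnion.1 hz
          refine Set.mem_iUnion.2 ⟨n, ?_⟩
          exact Set.mem_biUnion (Finset.self_mem_range_succ n) hn
      rw [hAB]
      have hsub : (⋃ n, C n)ᶜ ⊆ ⋃ j : ℕ, ⋂ i : ℕ,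
          (spanningSets R (j + i) \ ⋂ m : ℕ, {z | g m z ≤ (c (j + i) m : ℝ≥0∞)}) := by
        intro z hz
        have hzS : z ∈ ⋃ j, spanningSets R j := by
          rw [iUnion_spanningSets]; trivial
        obtain ⟨j, hj⟩ := Set.mem_iUnion.1 hzS
        refine Set.mem_iUnion.2 ⟨j, Set.mem_iInter.2 fun i => ?_⟩
        have hzS' : z ∈ spanningSets R (j + i) :=
          monotone_spanningSets R (Nat.le_add_right j i) hj
        have hzC : z ∉ C (j + i) := fun h => hz (Set.mem_iUnion.2 ⟨j + i, h⟩)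
        exact ⟨hzS', fun h => hzC ⟨hzS', h⟩⟩
      refine measure_mono_null hsub (measure_iUnion_null fun j => ?_)
      have hb : ∀ i : ℕ, R (⋂ i' : ℕ,
          (spanningSets R (j + i') \ ⋂ m : ℕ, {z | g m z ≤ (c (j + i') m : ℝ≥0∞)}))
          ≤ 2⁻¹ ^ (j + i) * 2 :=
        fun i => (measure_mono (Set.iInter_subset _ i)).trans (hD (j + i))
      have ht : Tendsto (fun i : ℕ => (2⁻¹ : ℝ≥0∞) ^ (j + i) * 2) atTop (𝓝 0) := by
        have h1 : Tendsto (fun i : ℕ => (2⁻¹ : ℝ≥0∞) ^ i) atTop (𝓝 0) :=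
          ENNReal.tendsto_pow_atTop_nhds_zero_of_lt_one (by norm_num)
        have he : (fun i : ℕ => (2⁻¹ : ℝ≥0∞) ^ (j + i) * 2)
            = fun i : ℕ => (2⁻¹ ^ j * 2) * 2⁻¹ ^ i := by
          funext i; rw [pow_add]; ring
        rw [he]
        have h2 : (2⁻¹ : ℝ≥0∞) ^ j * 2 ≠ ⊤ :=
          ENNReal.mul_ne_top (ENNReal.pow_ne_top (by simp)) ofNat_ne_top
        simpa using ENNReal.Tendsto.const_mul (a := (2⁻¹ : ℝ≥0∞) ^ j * 2) h1 (Or.inr h2)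
      exact le_antisymm (ge_of_tendsto' ht hb) (zero_le)
    · -- ℓ vanishes on the complements
      intro n
      rw [compl_compl]
      apply hvan
      rw [hEρ]
      refine ⟨humeas.indicator (hBmeas n), fun α hα => ?_⟩
      rw [hind (B n) (hBmeas n) u α]
      set m := ⌈α⌉₊ with hm
      have hαm : α ≤ (m : ℝ) := Nat.le_ceil α
      have hle2 : ∫⁻ z in B n, ρ z (α * u z) ∂ R ≤ ∫⁻ z in B n, g m z ∂ R := by
        rw [← hgeq m (B n)]
        apply lintegral_mono
        intro z
        apply hmono
        rw [abs_mul, abs_mul]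
        apply mul_le_mul_of_nonneg_right _ (abs_nonneg _)
        rwa [abs_of_pos hα, abs_of_nonneg (by positivity : (0:ℝ) ≤ (m : ℝ))]
      exact ne_top_of_le_ne_top (hBint n m) hle2
end

section
/- Let {X_n} be random variables in a Hausdorff topological space X obeying the large deviation principle with good rate function J, and let (C_δ)_{δ>0} be a decreasing family of closed sets with C = ⋂_δ C_δ closed, J(C) < ∞, ℙ(X_n ∈ C_δ) > 0 for all n, δ, and C ⊆ int C_δ for all δ. Then for every closed set F ⊆ X, limsup_{δ→0} limsup_{n→∞} (1/n) log ℙ(X_n ∈ F | X_n ∈ C_δ) ≤ −(J(F ∩ C) − J(C)). -/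
open MeasureTheory Filter Topology ENNReal

private lemma ereal_log_div_split (k : ℝ) (hk : 0 ≤ k) (A B : ℝ≥0∞) (hA : A ≠ ⊤)
    (hB0 : B ≠ 0) (hB : B ≠ ⊤) :
    (k : EReal) * ENNReal.log (A / B)
      = (k : EReal) * ENNReal.log A + (k : EReal) * ENNReal.log B⁻¹ := by
  rw [div_eq_mul_inv, ENNReal.log_mul_add]
  rcases eq_or_lt_of_le hk with hk0 | hkpos
  · simp [← hk0]
  · have hBinv0 : B⁻¹ ≠ 0 := ENNReal.inv_ne_zero.2 hB
    have hBinvtop : B⁻¹ ≠ ⊤ := ENNReal.inv_ne_top.2 hB0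
    rw [ENNReal.log_pos_real hBinv0 hBinvtop]
    rcases eq_or_ne A 0 with rfl | hA0
    · simp only [ENNReal.log_zero]
      rw [EReal.bot_add, EReal.coe_mul_bot_of_pos hkpos, EReal.bot_add]
    · rw [ENNReal.log_pos_real hA0 hA]
      norm_cast
      ring

/-- Conditional large deviation upper bound (Proposition B.1): if `{X_n}` (with laws
`μ n`) obeys the LDP with good rate function `J` and `(C δ)` is a decreasing family of
closed sets with `C = ⋂ C δ`, `J(C) < ∞`, `ℙ(X_n ∈ C δ) > 0` and `C ⊆ int (C δ)`, then
for every closed `F`,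
`limsup_{δ→0} limsup_n (1/n) log ℙ(X_n ∈ F | X_n ∈ C δ) ≤ −(J(F ∩ C) − J(C))`. -/
theorem stmt17 {X : Type*} [TopologicalSpace X] [T2Space X] [MeasurableSpace X]
    (μ : ℕ → Measure X) (hμ : ∀ n, IsProbabilityMeasure (μ n))
    (J : X → ℝ≥0∞)
    -- J is a good rate function
    (hJlsc : LowerSemicontinuous J)
    (hJcomp : ∀ c : ℝ≥0∞, c ≠ ⊤ → IsCompact {x : X | J x ≤ c})
    -- the large deviation principle
    (hupper : ∀ F : Set X, IsClosed F →
      limsup (fun n : ℕ => ((1 / (n : ℝ) : ℝ) : EReal) * ENNReal.log (μ n F)) atTop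
        ≤ -(((⨅ x ∈ F, J x : ℝ≥0∞)) : EReal))
    (hlower : ∀ G : Set X, IsOpen G →
      -(((⨅ x ∈ G, J x : ℝ≥0∞)) : EReal)
        ≤ liminf (fun n : ℕ => ((1 / (n : ℝ) : ℝ) : EReal) * ENNReal.log (μ n G)) atTop)
    -- the conditioning sets
    (C : ℝ → Set X) (hCcl : ∀ δ > (0:ℝ), IsClosed (C δ))
    (hdec : ∀ δ₁ δ₂ : ℝ, 0 < δ₁ → δ₁ ≤ δ₂ → C δ₁ ⊆ C δ₂)
    (Cset : Set X) (hCset : Cset = ⋂ (δ : ℝ) (_ : 0 < δ), C δ) (hCsetcl : IsClosed Cset)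
    (hJC : (⨅ x ∈ Cset, J x) ≠ ⊤)
    (hpos : ∀ n : ℕ, ∀ δ > (0:ℝ), 0 < μ n (C δ))
    (hint : ∀ δ > (0:ℝ), Cset ⊆ interior (C δ)) :
    ∀ F : Set X, IsClosed F →
      limsup (fun δ : ℝ =>
          limsup (fun n : ℕ => ((1 / (n : ℝ) : ℝ) : EReal)
            * ENNReal.log (μ n (F ∩ C δ) / μ n (C δ))) atTop) (𝓝[>] (0:ℝ))
        ≤ -((((⨅ x ∈ F ∩ Cset, J x : ℝ≥0∞)) : EReal)
            - (((⨅ x ∈ Cset, J x : ℝ≥0∞)) : EReal)) := by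
  intro F hF
  obtain ⟨c', hc'⟩ : ∃ c' : NNReal, (⨅ x ∈ Cset, J x) = (c' : ℝ≥0∞) :=
    ⟨(⨅ x ∈ Cset, J x).toNNReal, (ENNReal.coe_toNNReal hJC).symm⟩
  have hcE : ((⨅ x ∈ Cset, J x : ℝ≥0∞) : EReal) = ((c' : ℝ) : EReal) := by
    rw [hc', EReal.coe_nnreal_eq_coe_real]
  -- Step A : the inner bound, for every fixed δ > 0
  have inner : ∀ δ : ℝ, 0 < δ →
      limsup (fun n : ℕ => ((1 / (n : ℝ) : ℝ) : EReal)
          * ENNReal.log (μ n (F ∩ C δ) / μ n (C δ))) atTop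
        ≤ -(((⨅ x ∈ F ∩ C δ, J x : ℝ≥0∞)) : EReal) + ((c' : ℝ) : EReal) := by
    intro δ hδ
    have hμtop : ∀ (n : ℕ) (S : Set X), μ n S ≠ ⊤ := fun n S => measure_ne_top (μ n) S
    have hμ0 : ∀ n : ℕ, μ n (C δ) ≠ 0 := fun n => (hpos n δ hδ).ne'
    have hknn : ∀ n : ℕ, (0:ℝ) ≤ 1 / (n:ℝ) := fun n => by positivity
    -- limsup of the numerator part
    have hgle : limsup (fun n : ℕ => ((1 / (n : ℝ) : ℝ) : EReal)
          * ENNReal.log (μ n (F ∩ C δ))) atTop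
        ≤ -(((⨅ x ∈ F ∩ C δ, J x : ℝ≥0∞)) : EReal) :=
      hupper (F ∩ C δ) (hF.inter (hCcl δ hδ))
    have hgle0 : limsup (fun n : ℕ => ((1 / (n : ℝ) : ℝ) : EReal)
          * ENNReal.log (μ n (F ∩ C δ))) atTop ≤ 0 :=
      hgle.trans (by
        rw [← neg_zero]
        exact EReal.neg_le_neg_iff.2 (EReal.coe_ennreal_nonneg _))
    have hgnetop : limsup (fun n : ℕ => ((1 / (n : ℝ) : ℝ) : EReal)
          * ENNReal.log (μ n (F ∩ C δ))) atTop ≠ ⊤ :=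
      ne_top_of_le_ne_top (by simp) hgle0
    -- limsup of the denominator part
    have hhle : limsup (fun n : ℕ => ((1 / (n : ℝ) : ℝ) : EReal)
          * ENNReal.log ((μ n (C δ))⁻¹)) atTop ≤ ((c' : ℝ) : EReal) := by
      have e1 : limsup (fun n : ℕ => ((1 / (n : ℝ) : ℝ) : EReal)
            * ENNReal.log ((μ n (C δ))⁻¹)) atTop
          = limsup (-(fun n : ℕ => ((1 / (n : ℝ) : ℝ) : EReal)
            * ENNReal.log (μ n (C δ)))) atTop := by
        apply limsup_congr
        filter_upwards with n
        show ((1 / (n : ℝ) : ℝ) : EReal) * ENNReal.log ((μ n (C δ))⁻¹)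
            = -(((1 / (n : ℝ) : ℝ) : EReal) * ENNReal.log (μ n (C δ)))
        rw [ENNReal.log_inv, EReal.mul_comm, EReal.neg_mul, EReal.mul_comm]
      rw [e1, EReal.limsup_neg, EReal.neg_le, ← hcE]
      calc -((⨅ x ∈ Cset, J x : ℝ≥0∞) : EReal)
          ≤ -((⨅ x ∈ interior (C δ), J x : ℝ≥0∞) : EReal) := by
            apply EReal.neg_le_neg_iff.2
            exact EReal.coe_ennreal_le_coe_ennreal_iff.2
              (iInf_le_iInf_of_subset (hint δ hδ))
        _ ≤ liminf (fun n : ℕ => ((1 / (n : ℝ) : ℝ) : EReal)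
              * ENNReal.log (μ n (interior (C δ)))) atTop := hlower _ isOpen_interior
        _ ≤ liminf (fun n : ℕ => ((1 / (n : ℝ) : ℝ) : EReal)
              * ENNReal.log (μ n (C δ))) atTop :=
            liminf_le_liminf (by
              filter_upwards with n
              exact mul_le_mul_of_nonneg_left
                (ENNReal.log_monotone (measure_mono interior_subset))
                (EReal.coe_nonneg.2 (hknn n)))
    have hhnetop : limsup (fun n : ℕ => ((1 / (n : ℝ) : ℝ) : EReal)
          * ENNReal.log ((μ n (C δ))⁻¹)) atTop ≠ ⊤ :=
      ne_top_of_le_ne_top (EReal.coe_ne_top _) hhle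
    calc limsup (fun n : ℕ => ((1 / (n : ℝ) : ℝ) : EReal)
            * ENNReal.log (μ n (F ∩ C δ) / μ n (C δ))) atTop
        = limsup ((fun n : ℕ => ((1 / (n : ℝ) : ℝ) : EReal)
              * ENNReal.log (μ n (F ∩ C δ)))
            + (fun n : ℕ => ((1 / (n : ℝ) : ℝ) : EReal)
              * ENNReal.log ((μ n (C δ))⁻¹))) atTop := by
          apply limsup_congr
          filter_upwards with n
          exact ereal_log_div_split _ (hknn n) _ _ (hμtop n _) (hμ0 n) (hμtop n _)
      _ ≤ limsup (fun n : ℕ => ((1 / (n : ℝ) : ℝ) : EReal)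
              * ENNReal.log (μ n (F ∩ C δ))) atTop
          + limsup (fun n : ℕ => ((1 / (n : ℝ) : ℝ) : EReal)
              * ENNReal.log ((μ n (C δ))⁻¹)) atTop :=
          EReal.limsup_add_le (.inr hhnetop) (.inl hgnetop)
      _ ≤ -(((⨅ x ∈ F ∩ C δ, J x : ℝ≥0∞)) : EReal) + ((c' : ℝ) : EReal) :=
          add_le_add hgle hhle
  -- Step B : compactness argument
  have stepB : ∀ a : ℝ≥0∞, a ≠ ⊤ → a < (⨅ x ∈ F ∩ Cset, J x) →
      ∃ δ₀ : ℝ, 0 < δ₀ ∧ ∀ δ : ℝ, 0 < δ → δ ≤ δ₀ → a ≤ ⨅ x ∈ F ∩ C δ, J x := by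
    intro a ha hlt
    have hK : IsCompact {x : X | J x ≤ a} := hJcomp a ha
    have hKcl : IsClosed {x : X | J x ≤ a} := hK.isClosed
    set S : {d : ℝ // 0 < d} → Set X := fun d => (F ∩ {x : X | J x ≤ a}) ∩ C d.1 with hS
    have hScl : ∀ d, IsClosed (S d) := fun d => (hF.inter hKcl).inter (hCcl d.1 d.2)
    have hScomp : ∀ d, IsCompact (S d) := fun d =>
      hK.of_isClosed_subset (hScl d) (fun x hx => hx.1.2)
    have key : ∃ d : {d : ℝ // 0 < d}, S d = ∅ := by
      by_contra hcon
      push_neg at hcon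
      have hne : ∀ d, (S d).Nonempty := hcon
      have hdir : Directed (· ⊇ ·) S := by
        intro d e
        rcases le_total d.1 e.1 with hde | hde
        · exact ⟨d, subset_rfl, Set.inter_subset_inter_right _ (hdec _ _ d.2 hde)⟩
        · exact ⟨e, Set.inter_subset_inter_right _ (hdec _ _ e.2 hde), subset_rfl⟩
      have hnonempty : Nonempty {d : ℝ // 0 < d} := ⟨⟨1, one_pos⟩⟩
      obtain ⟨x, hx⟩ :=
        IsCompact.nonempty_iInter_of_directed_nonempty_isCompact_isClosed S hdir hne hScomp hScl
      simp only [Set.mem_iInter] at hx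
      have hxF : x ∈ F := (hx ⟨1, one_pos⟩).1.1
      have hxa : J x ≤ a := (hx ⟨1, one_pos⟩).1.2
      have hxC : x ∈ Cset := by
        rw [hCset]
        exact Set.mem_iInter₂.2 fun δ hδ => (hx ⟨δ, hδ⟩).2
      exact absurd hxa (not_le.2 (lt_of_lt_of_le hlt (biInf_le J ⟨hxF, hxC⟩)))
    obtain ⟨d, hd⟩ := key
    refine ⟨d.1, d.2, fun δ hδ hle => le_iInf₂ fun x hx => ?_⟩
    by_contra hJx
    push_neg at hJx
    have : x ∈ S d := ⟨⟨hx.1, hJx.le⟩, hdec δ d.1 hδ hle hx.2⟩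
    rw [hd] at this
    exact this
  -- Step C : conclusion
  have hrhs : -((((⨅ x ∈ F ∩ Cset, J x : ℝ≥0∞)) : EReal)
      - (((⨅ x ∈ Cset, J x : ℝ≥0∞)) : EReal))
      = -(((⨅ x ∈ F ∩ Cset, J x : ℝ≥0∞)) : EReal) + ((c' : ℝ) : EReal) := by
    rw [hcE, sub_eq_add_neg,
      EReal.neg_add (.inl (EReal.coe_ennreal_ne_bot _)) (.inr (by simp)),
      sub_eq_add_neg, neg_neg]
  rw [hrhs]
  rcases eq_or_ne (⨅ x ∈ F ∩ Cset, J x) 0 with hT0 | hT0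
  · rw [hT0]
    simp only [EReal.coe_ennreal_zero, neg_zero, zero_add]
    refine limsup_le_of_le (by isBoundedDefault) ?_
    filter_upwards [self_mem_nhdsWithin] with δ hδ
    refine (inner δ hδ).trans ?_
    calc -((⨅ x ∈ F ∩ C δ, J x : ℝ≥0∞) : EReal) + ((c':ℝ):EReal)
        ≤ 0 + ((c':ℝ):EReal) := add_le_add_left (by
          rw [← neg_zero]; exact EReal.neg_le_neg_iff.2 (EReal.coe_ennreal_nonneg _)) _
      _ = ((c':ℝ):EReal) := zero_add _
  · rw [← EReal.le_of_forall_lt_iff_le]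
    intro z hz
    set a : ℝ≥0∞ := ENNReal.ofReal ((c' : ℝ) - z) with haa
    have haT : (a : EReal) < ((⨅ x ∈ F ∩ Cset, J x : ℝ≥0∞) : EReal) := by
      rw [haa, EReal.coe_ennreal_ofReal,
        EReal.coe_strictMono.monotone.map_max]
      apply max_lt
      · by_contra hcon
        push_neg at hcon
        have h1 : -((((c' : ℝ) - z : ℝ)) : EReal) + ((c':ℝ):EReal)
            ≤ -((⨅ x ∈ F ∩ Cset, J x : ℝ≥0∞) : EReal) + ((c':ℝ):EReal) :=
          add_le_add_left (EReal.neg_le_neg_iff.2 hcon) _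
        have h2 : -((((c' : ℝ) - z : ℝ)) : EReal) + ((c':ℝ):EReal) = (z : EReal) := by
          norm_cast; ring
        rw [h2] at h1
        exact absurd (h1.trans_lt hz) (lt_irrefl _)
      · exact EReal.coe_ennreal_pos.2 (pos_iff_ne_zero.2 hT0)
    obtain ⟨δ₀, hδ₀pos, hδ₀⟩ := stepB a ENNReal.ofReal_ne_top
      (EReal.coe_ennreal_lt_coe_ennreal_iff.1 haT)
    refine limsup_le_of_le (by isBoundedDefault) ?_
    filter_upwards [Ioc_mem_nhdsGT hδ₀pos] with δ hδ
    refine (inner δ hδ.1).trans ?_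
    have h3 : (a : EReal) ≤ ((⨅ x ∈ F ∩ C δ, J x : ℝ≥0∞) : EReal) :=
      EReal.coe_ennreal_le_coe_ennreal_iff.2 (hδ₀ δ hδ.1 hδ.2)
    have h5 : ((((c':ℝ) - z : ℝ)) : EReal) ≤ (a : EReal) := by
      rw [haa, EReal.coe_ennreal_ofReal]
      exact EReal.coe_le_coe_iff.2 (le_max_left _ _)
    calc -((⨅ x ∈ F ∩ C δ, J x : ℝ≥0∞) : EReal) + ((c':ℝ):EReal)
        ≤ -(a : EReal) + ((c':ℝ):EReal) := add_le_add_left (EReal.neg_le_neg_iff.2 h3) _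
      _ ≤ -((((c':ℝ) - z : ℝ)) : EReal) + ((c':ℝ):EReal) :=
          add_le_add_left (EReal.neg_le_neg_iff.2 h5) _
      _ = (z : EReal) := by norm_cast; ring
end

section
/- Under the hypotheses of the conditional upper bound (LDP with good rate function J, decreasing closed sets C_δ with ⋂_δ C_δ = C, J(C) < ∞, ℙ(X_n ∈ C_δ) > 0, C ⊆ int C_δ), if H ⊆ X is open and contains the (compact, nonempty) set ℋ = argmin_{x∈C} J(x) of minimizers of J on C, then limsup_{δ→0} limsup_{n→∞} (1/n) log ℙ(X_n ∉ H | X_n ∈ C_δ) < 0; in particular the conditional probability of being outside H decays exponentially. -/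
open MeasureTheory Filter Topology ENNReal

lemma aux_distrib18 (c : ℝ) (hc : 0 ≤ c) (x : EReal) (r : ℝ) :
    (c : EReal) * (x + (r : EReal)) = (c : EReal) * x + (c : EReal) * (r : EReal) := by
  rcases eq_or_lt_of_le hc with h | h
  · simp [← h]
  · have hc' : (0 : EReal) < (c : EReal) := by exact_mod_cast h
    induction x using EReal.rec with
    | bot =>
        rw [EReal.bot_add, EReal.mul_bot_of_pos hc']
        have : (c : EReal) * (r : EReal) = ((c * r : ℝ) : EReal) := by norm_cast
        rw [this, EReal.bot_add]
    | coe x => norm_cast; ring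
    | top =>
        rw [EReal.top_add_coe, EReal.mul_top_of_pos hc']
        have : (c : EReal) * (r : EReal) = ((c * r : ℝ) : EReal) := by norm_cast
        rw [this, EReal.top_add_coe]

lemma aux_gap18 {X : Type*} [TopologicalSpace X] [T2Space X] (J : X → ℝ≥0∞)
    (hJcomp : ∀ c : ℝ≥0∞, c ≠ ⊤ → IsCompact {x : X | J x ≤ c})
    (A : Set X) (hA : IsClosed A) (m : ℝ≥0∞) (hm : m ≠ ⊤)
    (hnot : ∀ x ∈ A, ¬ J x ≤ m) : m < ⨅ x ∈ A, J x := by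
  by_contra h
  push_neg at h
  set T : ℕ → Set X := fun k => A ∩ {x | J x ≤ m + (↑(k+1) : ℝ≥0∞)⁻¹} with hT
  have hmono : ∀ k l : ℕ, k ≤ l → T l ⊆ T k := by
    intro k l hkl x hx
    refine ⟨hx.1, Set.mem_setOf.mpr (le_trans (Set.mem_setOf.mp hx.2) ?_)⟩
    gcongr
  have hne : ∀ k, (T k).Nonempty := by
    intro k
    have hε : ((↑(k+1) : ℝ≥0∞)⁻¹) ≠ 0 := by simp
    have : ⨅ x ∈ A, J x < m + (↑(k+1) : ℝ≥0∞)⁻¹ :=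
      lt_of_le_of_lt h (ENNReal.lt_add_right hm hε)
    rw [iInf_lt_iff] at this
    obtain ⟨x, hx⟩ := this
    rw [iInf_lt_iff] at hx
    obtain ⟨hxA, hxlt⟩ := hx
    exact ⟨x, hxA, hxlt.le⟩
  have hcl : ∀ k, IsClosed (T k) := by
    intro k
    exact hA.inter (hJcomp _ (by simp [hm, ENNReal.add_ne_top, ENNReal.inv_ne_top])).isClosed
  have hcomp : ∀ k, IsCompact (T k) := by
    intro k
    refine (hJcomp (m + 1) (by simp [hm])).of_isClosed_subset (hcl k) ?_
    intro x hx
    refine le_trans (Set.mem_setOf.mp hx.2) ?_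
    gcongr
    exact ENNReal.inv_le_one.mpr (by exact_mod_cast Nat.one_le_iff_ne_zero.mpr (Nat.succ_ne_zero k))
  obtain ⟨x, hx⟩ := IsCompact.nonempty_iInter_of_directed_nonempty_isCompact_isClosed T
    (fun k l => ⟨max k l, hmono k _ (le_max_left k l), hmono l _ (le_max_right k l)⟩)
    hne hcomp hcl
  simp only [Set.mem_iInter] at hx
  have hxA : x ∈ A := (hx 0).1
  have hxle : J x ≤ m := by
    refine ENNReal.le_of_forall_pos_le_add fun ε hε _ => ?_
    obtain ⟨n, hn⟩ := ENNReal.exists_inv_nat_lt (by exact_mod_cast hε.ne' : (ε : ℝ≥0∞) ≠ 0)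
    refine le_trans (Set.mem_setOf.mp (hx n).2) ?_
    gcongr
    refine le_trans ?_ hn.le
    gcongr
    exact_mod_cast Nat.le_succ n
  exact hnot x hxA hxle

lemma aux_delta18 {X : Type*} [TopologicalSpace X] [T2Space X] (J : X → ℝ≥0∞)
    (hJcomp : ∀ c : ℝ≥0∞, c ≠ ⊤ → IsCompact {x : X | J x ≤ c})
    (C : ℝ → Set X) (hCcl : ∀ δ > (0:ℝ), IsClosed (C δ))
    (hdec : ∀ δ₁ δ₂ : ℝ, 0 < δ₁ → δ₁ ≤ δ₂ → C δ₁ ⊆ C δ₂)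
    (Cset : Set X) (hCset : Cset = ⋂ (δ : ℝ) (_ : 0 < δ), C δ)
    (A : Set X) (hA : IsClosed A) (m' : ℝ≥0∞) (hm' : m' ≠ ⊤)
    (hempty : ∀ x ∈ A ∩ Cset, ¬ J x ≤ m') :
    ∃ δ0 ∈ Set.Ioc (0:ℝ) 1, ∀ x ∈ A ∩ C δ0, ¬ J x ≤ m' := by
  by_contra h
  push_neg at h
  set t : (Set.Ioc (0:ℝ) 1) → Set X := fun δ => (A ∩ C δ.1) ∩ {x | J x ≤ m'} with ht
  have hmono : ∀ δ₁ δ₂ : Set.Ioc (0:ℝ) 1, δ₁.1 ≤ δ₂.1 → t δ₁ ⊆ t δ₂ := by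
    intro δ₁ δ₂ hle x hx
    exact ⟨⟨hx.1.1, hdec δ₁.1 δ₂.1 δ₁.2.1 hle hx.1.2⟩, hx.2⟩
  have hdir : Directed (· ⊇ ·) t := by
    intro δ₁ δ₂
    refine ⟨⟨min δ₁.1 δ₂.1, lt_min δ₁.2.1 δ₂.2.1, le_trans (min_le_left _ _) δ₁.2.2⟩, ?_, ?_⟩
    · exact hmono _ _ (min_le_left _ _)
    · exact hmono _ _ (min_le_right _ _)
  have hne : ∀ δ, (t δ).Nonempty := by
    intro δ
    obtain ⟨x, hx1, hx2⟩ := h δ.1 δ.2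
    exact ⟨x, hx1, hx2⟩
  have hcl : ∀ δ, IsClosed (t δ) := fun δ =>
    (hA.inter (hCcl δ.1 δ.2.1)).inter (hJcomp m' hm').isClosed
  have hcomp : ∀ δ, IsCompact (t δ) :=
    fun δ => (hJcomp m' hm').of_isClosed_subset (hcl δ) (fun x hx => hx.2)
  have : Nonempty (Set.Ioc (0:ℝ) 1) := ⟨⟨1, zero_lt_one, le_refl 1⟩⟩
  obtain ⟨x, hx⟩ := IsCompact.nonempty_iInter_of_directed_nonempty_isCompact_isClosed t
    hdir hne hcomp hcl
  simp only [Set.mem_iInter] at hx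
  have hxC : x ∈ Cset := by
    rw [hCset]
    simp only [Set.mem_iInter]
    intro δ hδ
    rcases le_or_gt δ 1 with hδ1 | hδ1
    · exact (hx ⟨δ, hδ, hδ1⟩).1.2
    · exact hdec 1 δ zero_lt_one hδ1.le (hx ⟨1, zero_lt_one, le_refl 1⟩).1.2
  exact hempty x ⟨(hx ⟨1, zero_lt_one, le_refl 1⟩).1.1, hxC⟩ (hx ⟨1, zero_lt_one, le_refl 1⟩).2

lemma aux_coe18 (x : ℝ≥0∞) (hx : x ≠ ⊤) : (x : EReal) = ((x.toReal : ℝ) : EReal) := by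
  rw [← EReal.coe_toReal (x := (x : EReal)) (by simpa using hx) (by simp),
    EReal.toReal_coe_ennreal]


/-- Conditional law of large numbers (Proposition B.5): under the hypotheses of the
conditional upper bound, if `H` is open and contains the set `ℋ` of minimizers of `J`
on `C`, then `limsup_{δ→0} limsup_n (1/n) log ℙ(X_n ∉ H | X_n ∈ C δ) < 0`. -/
theorem stmt18 {X : Type*} [TopologicalSpace X] [T2Space X] [MeasurableSpace X]
    (μ : ℕ → Measure X) (hμ : ∀ n, IsProbabilityMeasure (μ n))
    (J : X → ℝ≥0∞)
    -- J is a good rate function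
    (hJlsc : LowerSemicontinuous J)
    (hJcomp : ∀ c : ℝ≥0∞, c ≠ ⊤ → IsCompact {x : X | J x ≤ c})
    -- the large deviation principle
    (hupper : ∀ F : Set X, IsClosed F →
      limsup (fun n : ℕ => ((1 / (n : ℝ) : ℝ) : EReal) * ENNReal.log (μ n F)) atTop
        ≤ -(((⨅ x ∈ F, J x : ℝ≥0∞)) : EReal))
    (hlower : ∀ G : Set X, IsOpen G →
      -(((⨅ x ∈ G, J x : ℝ≥0∞)) : EReal)
        ≤ liminf (fun n : ℕ => ((1 / (n : ℝ) : ℝ) : EReal) * ENNReal.log (μ n G)) atTop)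
    -- the conditioning sets
    (C : ℝ → Set X) (hCcl : ∀ δ > (0:ℝ), IsClosed (C δ))
    (hdec : ∀ δ₁ δ₂ : ℝ, 0 < δ₁ → δ₁ ≤ δ₂ → C δ₁ ⊆ C δ₂)
    (Cset : Set X) (hCset : Cset = ⋂ (δ : ℝ) (_ : 0 < δ), C δ) (hCsetcl : IsClosed Cset)
    (hJC : (⨅ x ∈ Cset, J x) ≠ ⊤)
    (hpos : ∀ n : ℕ, ∀ δ > (0:ℝ), 0 < μ n (C δ))
    (hint : ∀ δ > (0:ℝ), Cset ⊆ interior (C δ))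
    -- the set of minimizers of J on C and an open set H containing it
    (ℋ : Set X) (hℋ : ℋ = {x ∈ Cset | J x = ⨅ y ∈ Cset, J y})
    (H : Set X) (hH : IsOpen H) (hℋH : ℋ ⊆ H) :
    limsup (fun δ : ℝ =>
        limsup (fun n : ℕ => ((1 / (n : ℝ) : ℝ) : EReal)
          * ENNReal.log (μ n (Hᶜ ∩ C δ) / μ n (C δ))) atTop) (𝓝[>] (0:ℝ))
      < 0 := by
  set m : ℝ≥0∞ := ⨅ x ∈ Cset, J x with hm
  -- no point of Hᶜ ∩ Cset has J x ≤ m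
  have hnot : ∀ x ∈ Hᶜ ∩ Cset, ¬ J x ≤ m := by
    rintro x ⟨hxH, hxC⟩ hle
    have hge : m ≤ J x := iInf₂_le x hxC
    exact hxH (hℋH (by rw [hℋ]; exact ⟨hxC, le_antisymm hle hge⟩))
  have hgap : m < ⨅ x ∈ Hᶜ ∩ Cset, J x :=
    aux_gap18 J hJcomp _ (hH.isClosed_compl.inter hCsetcl) m hJC hnot
  obtain ⟨m', hm1, hm2⟩ := exists_between hgap
  have hm't : m' ≠ ⊤ := hm2.ne_top
  have hempty : ∀ x ∈ Hᶜ ∩ Cset, ¬ J x ≤ m' := fun x hx hle =>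
    absurd (le_trans (iInf₂_le x hx) hle) (not_le.mpr hm2)
  obtain ⟨δ0, hδ0mem, hδ0key⟩ :=
    aux_delta18 J hJcomp C hCcl hdec Cset hCset _ hH.isClosed_compl m' hm't hempty
  -- main estimate for fixed δ
  have hfinal : ∀ δ : ℝ, 0 < δ → δ ≤ δ0 →
      limsup (fun n : ℕ => ((1 / (n : ℝ) : ℝ) : EReal)
          * ENNReal.log (μ n (Hᶜ ∩ C δ) / μ n (C δ))) atTop
        ≤ -((m' : ℝ≥0∞) : EReal) + ((m : ℝ≥0∞) : EReal) := by
    intro δ hδ hδ0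
    have hFcl : IsClosed (Hᶜ ∩ C δ) := hH.isClosed_compl.inter (hCcl δ hδ)
    set u : ℕ → EReal :=
      fun n => ((1 / (n : ℝ) : ℝ) : EReal) * ENNReal.log (μ n (Hᶜ ∩ C δ)) with hu
    set v : ℕ → EReal :=
      fun n => ((1 / (n : ℝ) : ℝ) : EReal) * ENNReal.log (μ n (C δ)) with hv
    have hb0 : ∀ n, μ n (C δ) ≠ 0 := fun n => (hpos n δ hδ).ne'
    have hbt : ∀ n, μ n (C δ) ≠ ⊤ := fun n => measure_ne_top _ _
    have hlogb : ∀ n, ENNReal.log (μ n (C δ))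
        = (((ENNReal.log (μ n (C δ))).toReal : ℝ) : EReal) := fun n =>
      (EReal.coe_toReal (by simp [hbt n]) (by simp [hb0 n])).symm
    set s : ℕ → EReal := fun n => ((1 / (n : ℝ) : ℝ) : EReal)
        * ((-(ENNReal.log (μ n (C δ))).toReal : ℝ) : EReal) with hs
    have hnn : ∀ n : ℕ, (0:ℝ) ≤ 1 / (n : ℝ) := fun n => by positivity
    have heq : ∀ n : ℕ, ((1 / (n : ℝ) : ℝ) : EReal)
        * ENNReal.log (μ n (Hᶜ ∩ C δ) / μ n (C δ)) = u n + s n := by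
      intro n
      rw [div_eq_mul_inv ((μ n) (Hᶜ ∩ C δ)) ((μ n) (C δ)), ENNReal.log_mul_add, ENNReal.log_inv, hlogb n]
      rw [show -((((ENNReal.log (μ n (C δ))).toReal : ℝ)) : EReal)
          = ((-(ENNReal.log (μ n (C δ))).toReal : ℝ) : EReal) by norm_cast]
      exact aux_distrib18 _ (hnn n) _ _
    have hs_eq : s = fun n => - v n := by
      funext n
      show ((1 / (n : ℝ) : ℝ) : EReal) * ((-(ENNReal.log (μ n (C δ))).toReal : ℝ) : EReal)
        = -(((1 / (n : ℝ) : ℝ) : EReal) * ENNReal.log (μ n (C δ)))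
      conv_rhs => rw [hlogb n]
      rw [show ((-(ENNReal.log (μ n (C δ))).toReal : ℝ) : EReal)
          = -(((ENNReal.log (μ n (C δ))).toReal : ℝ) : EReal) by norm_cast]
      rw [mul_neg]
    -- limsup u ≤ -m'
    have hm'le : (m' : ℝ≥0∞) ≤ ⨅ x ∈ Hᶜ ∩ C δ, J x := by
      refine le_iInf₂ fun x hx => ?_
      have : x ∈ Hᶜ ∩ C δ0 := ⟨hx.1, hdec δ δ0 hδ hδ0 hx.2⟩
      exact (not_le.mp (hδ0key x this)).le
    have h1 : limsup u atTop ≤ -((m' : ℝ≥0∞) : EReal) := by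
      refine le_trans (hupper _ hFcl) ?_
      exact EReal.neg_le_neg_iff.mpr (EReal.coe_ennreal_le_coe_ennreal_iff.mpr hm'le)
    have hu_top : limsup u atTop ≠ ⊤ := by
      have h0 : limsup u atTop ≤ 0 := by
        refine le_trans (hupper _ hFcl) ?_
        rw [← neg_zero]
        exact EReal.neg_le_neg_iff.mpr (EReal.coe_ennreal_nonneg _)
      exact ne_top_of_le_ne_top (by simp) h0
    -- liminf v ≥ -m
    have h2 : -((m : ℝ≥0∞) : EReal) ≤ liminf v atTop := by
      have hsub : ∀ n : ℕ, ((1 / (n : ℝ) : ℝ) : EReal)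
          * ENNReal.log (μ n (interior (C δ))) ≤ v n := fun n =>
        mul_le_mul_of_nonneg_left
          (ENNReal.log_le_log_iff.mpr (measure_mono interior_subset))
          (by exact_mod_cast hnn n)
      have hle : (⨅ x ∈ interior (C δ), J x) ≤ m :=
        le_iInf₂ fun x hx => iInf₂_le x (hint δ hδ hx)
      calc -((m : ℝ≥0∞) : EReal)
          ≤ -(((⨅ x ∈ interior (C δ), J x : ℝ≥0∞)) : EReal) :=
            EReal.neg_le_neg_iff.mpr (EReal.coe_ennreal_le_coe_ennreal_iff.mpr hle)
        _ ≤ liminf (fun n : ℕ => ((1 / (n : ℝ) : ℝ) : EReal)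
              * ENNReal.log (μ n (interior (C δ)))) atTop := hlower _ isOpen_interior
        _ ≤ liminf v atTop := liminf_le_liminf (Eventually.of_forall hsub)
    have h3 : limsup s atTop ≤ ((m : ℝ≥0∞) : EReal) := by
      rw [hs_eq]
      have : (fun n => - v n) = -v := rfl
      rw [this, EReal.limsup_neg]
      rw [← EReal.neg_le_neg_iff, neg_neg]
      exact le_trans h2 (le_refl _)
    have hs_top : limsup s atTop ≠ ⊤ :=
      ne_top_of_le_ne_top (by simp [hJC]) h3
    calc limsup (fun n : ℕ => ((1 / (n : ℝ) : ℝ) : EReal)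
          * ENNReal.log (μ n (Hᶜ ∩ C δ) / μ n (C δ))) atTop
        = limsup (u + s) atTop := limsup_congr (Eventually.of_forall heq)
      _ ≤ limsup u atTop + limsup s atTop :=
          EReal.limsup_add_le (Or.inr hs_top) (Or.inl hu_top)
      _ ≤ -((m' : ℝ≥0∞) : EReal) + ((m : ℝ≥0∞) : EReal) := add_le_add h1 h3
  -- conclude
  have hev : ∀ᶠ δ in 𝓝[>] (0:ℝ),
      limsup (fun n : ℕ => ((1 / (n : ℝ) : ℝ) : EReal)
        * ENNReal.log (μ n (Hᶜ ∩ C δ) / μ n (C δ))) atTop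
      ≤ -((m' : ℝ≥0∞) : EReal) + ((m : ℝ≥0∞) : EReal) := by
    filter_upwards [Ioc_mem_nhdsGT hδ0mem.1] with δ hδ
    exact hfinal δ hδ.1 hδ.2
  refine lt_of_le_of_lt (limsup_le_of_le (by isBoundedDefault) hev) ?_
  rw [aux_coe18 m hJC, aux_coe18 m' hm't]
  rw [show -((m'.toReal : ℝ) : EReal) + ((m.toReal : ℝ) : EReal)
      = ((-m'.toReal + m.toReal : ℝ) : EReal) by norm_cast]
  have hlt : m.toReal < m'.toReal := (ENNReal.toReal_lt_toReal hJC hm't).mpr hm1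
  exact_mod_cast (by linarith : -m'.toReal + m.toReal < (0:ℝ))
end
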